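/- Let a, b > 0, γ ∈ (0,1), ζ ∈ (0,1), c̄ > 0, β > 0, g Inada, and set θ(m) := (am+b)[(a − (1−ζ^{1−γ})/γ) m + (b − c̄)] + a m (ℓ(m) − β), where ℓ is as above. Then θ''(m) = 2a(a − (1−ζ^{1−γ})/γ) − ((1−γ)/γ)² (b²/(a m³)) I'( ((1−γ)/γ)(1 + b/(am)) ) > 0 for all m > 0 whenever a ≥ (1−ζ^{1−γ})/γ, since I'(y) = 1/g''(I(y)) < 0. -/

import Mathlib

/-- Inada-type assumptions on the healthcare efficacy function `g`:
`g(0)=0`, `g` is twice differentiable on `(0,∞)` with `g' > 0`, `g'' < 0`,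
`g'(0+) = ∞` and `g'(∞) = 0`, and `g` is nonnegative and continuous on `[0,∞)`. -/
def Inada (g : ℝ → ℝ) : Prop :=
  g 0 = 0 ∧ ContinuousOn g (Set.Ici 0) ∧ (∀ x ≥ (0 : ℝ), 0 ≤ g x) ∧
  (∀ x > (0 : ℝ), DifferentiableAt ℝ g x) ∧
  (∀ x > (0 : ℝ), DifferentiableAt ℝ (deriv g) x) ∧
  (∀ x > (0 : ℝ), 0 < deriv g x) ∧ (∀ x > (0 : ℝ), deriv (deriv g) x < 0) ∧
  Filter.Tendsto (deriv g) (nhdsWithin 0 (Set.Ioi 0)) Filter.atTop ∧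
  Filter.Tendsto (deriv g) Filter.atTop (nhds 0)

set_option maxHeartbeats 1000000 in
theorem stmt_15 (g : ℝ → ℝ) (hg : Inada g) (a b γ ζ cbar β : ℝ)
    (hb : 0 < b) (hγ : γ ∈ Set.Ioo (0 : ℝ) 1) (hζ : ζ ∈ Set.Ioo (0 : ℝ) 1)
    (hcbar : 0 < cbar) (hβ : 0 < β)
    (hage : (1 - ζ ^ (1 - γ)) / γ ≤ a)
    (I : ℝ → ℝ) (hI : ∀ l > (0 : ℝ), 0 < I l ∧ deriv g (I l) = l)
    (hI' : ∀ y > (0 : ℝ), HasDerivAt I (1 / deriv (deriv g) (I y)) y)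
    (ell θ : ℝ → ℝ)
    (hell : ∀ m > (0 : ℝ),
      ell m = sSup ((fun h => g h - (1 - γ) / γ * (1 + b / (a * m)) * h) '' Set.Ici 0))
    (hθ : ∀ m, θ m = (a * m + b) * ((a - (1 - ζ ^ (1 - γ)) / γ) * m + (b - cbar))
        + a * m * (ell m - β)) :
    ∀ m > (0 : ℝ),
      deriv (deriv θ) m
        = 2 * a * (a - (1 - ζ ^ (1 - γ)) / γ) -
            ((1 - γ) / γ) ^ 2 * (b ^ 2 / (a * m ^ 3)) *
              deriv I ((1 - γ) / γ * (1 + b / (a * m))) ∧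
      0 < deriv (deriv θ) m := by
  obtain ⟨hg0, hgc, hgnn, hgd, hgd2, hgp, hgcc, htop, h0⟩ := hg
  have hγ0 := hγ.1
  have hγ1 := hγ.2
  set c : ℝ := (1 - γ) / γ with hc_def
  set k : ℝ := (1 - ζ ^ (1 - γ)) / γ with hk_def
  have hc : 0 < c := div_pos (by linarith) hγ0
  have hζlt : ζ ^ (1 - γ) < 1 := Real.rpow_lt_one hζ.1.le hζ.2 (by linarith)
  have hk : 0 < k := div_pos (by linarith) hγ0
  have ha : 0 < a := lt_of_lt_of_le hk hage
  have ham : a ≠ 0 := ne_of_gt ha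
  -- the derivative of g is strictly decreasing on (0, ∞)
  have hanti : StrictAntiOn (deriv g) (Set.Ioi 0) := by
    apply strictAntiOn_of_deriv_neg (convex_Ioi 0)
    · exact fun x hx => ((hgd2 x hx).continuousAt).continuousWithinAt
    · intro x hx
      rw [interior_Ioi] at hx
      exact hgcc x hx
  -- the function h ↦ g h - l h is maximized over [0,∞) at h = I l
  have key : ∀ l > (0 : ℝ), ∀ h ≥ (0 : ℝ), g h - l * h ≤ g (I l) - l * I l := by
    intro l hl h hh
    obtain ⟨hx0, hgx⟩ := hI l hl
    have hF : ∀ y > (0 : ℝ), HasDerivAt (fun z => g z - l * z) (deriv g y - l) y := by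
      intro y hy
      simpa using ((hgd y hy).hasDerivAt).fun_sub ((hasDerivAt_id y).const_mul l)
    rcases le_total h (I l) with hhx | hhx
    · have hmono : MonotoneOn (fun z => g z - l * z) (Set.Icc 0 (I l)) := by
        apply monotoneOn_of_deriv_nonneg (convex_Icc 0 (I l))
        · exact (hgc.mono Set.Icc_subset_Ici_self).sub
            ((continuous_const.mul continuous_id).continuousOn)
        · intro y hy
          rw [interior_Icc] at hy
          exact ((hF y hy.1).differentiableAt).differentiableWithinAt
        · intro y hy
          rw [interior_Icc] at hy
          rw [(hF y hy.1).deriv]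
          have hlt := hanti (Set.mem_Ioi.mpr hy.1) (Set.mem_Ioi.mpr hx0) hy.2
          rw [hgx] at hlt
          linarith
      exact hmono ⟨hh, hhx⟩ ⟨hx0.le, le_refl _⟩ hhx
    · have hantiF : AntitoneOn (fun z => g z - l * z) (Set.Ici (I l)) := by
        apply antitoneOn_of_deriv_nonpos (convex_Ici (I l))
        · intro y hy
          exact ((hF y (lt_of_lt_of_le hx0 hy)).differentiableAt).continuousAt.continuousWithinAt
        · intro y hy
          rw [interior_Ici] at hy
          exact ((hF y (hx0.trans hy)).differentiableAt).differentiableWithinAt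
        · intro y hy
          rw [interior_Ici] at hy
          rw [(hF y (hx0.trans hy)).deriv]
          have hlt := hanti (Set.mem_Ioi.mpr hx0) (Set.mem_Ioi.mpr (hx0.trans hy)) hy
          rw [hgx] at hlt
          linarith
      exact hantiF Set.self_mem_Ici hhx hhx
  have hLpos : ∀ m : ℝ, 0 < m → 0 < c * (1 + b / (a * m)) := by
    intro m hm
    have : 0 < b / (a * m) := div_pos hb (mul_pos ha hm)
    exact mul_pos hc (by linarith)
  -- explicit formula for ell on (0, ∞)
  have hellval : ∀ m : ℝ, 0 < m →
      ell m = g (I (c * (1 + b / (a * m))))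
        - c * (1 + b / (a * m)) * I (c * (1 + b / (a * m))) := by
    intro m hm
    rw [hell m hm]
    apply IsGreatest.csSup_eq
    constructor
    · exact ⟨I (c * (1 + b / (a * m))), (hI _ (hLpos m hm)).1.le, rfl⟩
    · rintro y ⟨h, hh, rfl⟩
      exact key _ (hLpos m hm) h hh
  -- derivative of the multiplier function
  have hLder : ∀ m : ℝ, 0 < m → HasDerivAt (fun x => c * (1 + b / (a * x)))
      (c * (b / a * -(m ^ 2)⁻¹)) m := by
    intro m hm
    have h1 : HasDerivAt (fun x : ℝ => x⁻¹) (-(m ^ 2)⁻¹) m := hasDerivAt_inv (ne_of_gt hm)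
    have h2 := ((h1.const_mul (b / a)).const_add 1).const_mul c
    have heq : (fun x : ℝ => c * (1 + b / (a * x))) = fun x => c * (1 + b / a * x⁻¹) := by
      funext x
      rw [← div_div, div_eq_mul_inv (b / a)]
    rw [heq]
    exact h2
  have hILder : ∀ m : ℝ, 0 < m → HasDerivAt (fun x => I (c * (1 + b / (a * x))))
      (1 / deriv (deriv g) (I (c * (1 + b / (a * m)))) * (c * (b / a * -(m ^ 2)⁻¹))) m := by
    intro m hm
    exact (hI' _ (hLpos m hm)).comp m (hLder m hm)
  -- derivative of the "optimized" Lagrangian value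
  have hφ : ∀ m : ℝ, 0 < m → HasDerivAt
      (fun x => g (I (c * (1 + b / (a * x))))
        - c * (1 + b / (a * x)) * I (c * (1 + b / (a * x))))
      (deriv g (I (c * (1 + b / (a * m))))
          * (1 / deriv (deriv g) (I (c * (1 + b / (a * m)))) * (c * (b / a * -(m ^ 2)⁻¹)))
        - (c * (b / a * -(m ^ 2)⁻¹) * I (c * (1 + b / (a * m)))
          + c * (1 + b / (a * m))
            * (1 / deriv (deriv g) (I (c * (1 + b / (a * m)))) * (c * (b / a * -(m ^ 2)⁻¹)))))
      m := by
    intro m hm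
    have hJ : 0 < I (c * (1 + b / (a * m))) := (hI _ (hLpos m hm)).1
    have h1 : HasDerivAt (fun x => g (I (c * (1 + b / (a * x)))))
        (deriv g (I (c * (1 + b / (a * m))))
          * (1 / deriv (deriv g) (I (c * (1 + b / (a * m)))) * (c * (b / a * -(m ^ 2)⁻¹)))) m :=
      ((hgd _ hJ).hasDerivAt).comp m (hILder m hm)
    exact h1.sub ((hLder m hm).mul (hILder m hm))
  -- first derivative of θ on (0, ∞)
  set θ1 : ℝ → ℝ := fun x =>
    a * ((a - k) * x + (b - cbar)) + (a * x + b) * (a - k)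
      + (a * ((g (I (c * (1 + b / (a * x))))
            - c * (1 + b / (a * x)) * I (c * (1 + b / (a * x)))) - β)
        + a * x * (c * b / a * ((x ^ 2)⁻¹ * I (c * (1 + b / (a * x)))))) with hθ1_def
  have hT1 : ∀ m : ℝ, HasDerivAt (fun x => a * x + b) a m := by
    intro m
    simpa using ((hasDerivAt_id m).const_mul a).add_const b
  have hT2 : ∀ m : ℝ, HasDerivAt (fun x => (a - k) * x + (b - cbar)) (a - k) m := by
    intro m
    simpa using ((hasDerivAt_id m).const_mul (a - k)).add_const (b - cbar)
  have hT4 : ∀ m : ℝ, HasDerivAt (fun x => a * x) a m := by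
    intro m
    simpa using (hasDerivAt_id m).const_mul a
  have hθder : ∀ m : ℝ, 0 < m → HasDerivAt θ (θ1 m) m := by
    intro m hm
    have hev : θ =ᶠ[nhds m] fun x =>
        (a * x + b) * ((a - k) * x + (b - cbar))
          + a * x * ((g (I (c * (1 + b / (a * x))))
            - c * (1 + b / (a * x)) * I (c * (1 + b / (a * x)))) - β) := by
      filter_upwards [Ioi_mem_nhds hm] with x hx
      rw [hθ x, hellval x hx]
    have hΘ := ((hT1 m).fun_mul (hT2 m)).fun_add ((hT4 m).fun_mul ((hφ m hm).sub_const β))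
    refine (HasDerivAt.congr_of_eventuallyEq ?_ hev)
    convert hΘ using 1
    rw [hθ1_def]
    simp only
    rw [(hI _ (hLpos m hm)).2]
    ring
  have hdθ : ∀ m : ℝ, 0 < m → deriv θ m = θ1 m := fun m hm => (hθder m hm).deriv
  intro m hm
  have hLm : 0 < c * (1 + b / (a * m)) := hLpos m hm
  have hJ : 0 < I (c * (1 + b / (a * m))) := (hI _ hLm).1
  have hG2 : deriv (deriv g) (I (c * (1 + b / (a * m)))) < 0 := hgcc _ hJ
  have hG2ne : deriv (deriv g) (I (c * (1 + b / (a * m)))) ≠ 0 := ne_of_lt hG2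
  -- second derivative: differentiate θ1
  have hW : HasDerivAt (fun x => (x ^ 2)⁻¹ * I (c * (1 + b / (a * x))))
      (-(2 * m ^ 1) / (m ^ 2) ^ 2 * I (c * (1 + b / (a * m)))
        + (m ^ 2)⁻¹ * (1 / deriv (deriv g) (I (c * (1 + b / (a * m))))
            * (c * (b / a * -(m ^ 2)⁻¹)))) m := by
    have hp : HasDerivAt (fun x : ℝ => (x ^ 2)⁻¹) (-(2 * m ^ 1) / (m ^ 2) ^ 2) m := by
      have := (hasDerivAt_pow 2 m).fun_inv (pow_ne_zero 2 (ne_of_gt hm))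
      simpa using this
    exact hp.mul (hILder m hm)
  have hθ1der : HasDerivAt θ1
      (a * (a - k) + a * (a - k)
        + (a * (deriv g (I (c * (1 + b / (a * m))))
              * (1 / deriv (deriv g) (I (c * (1 + b / (a * m)))) * (c * (b / a * -(m ^ 2)⁻¹)))
            - (c * (b / a * -(m ^ 2)⁻¹) * I (c * (1 + b / (a * m)))
              + c * (1 + b / (a * m))
                * (1 / deriv (deriv g) (I (c * (1 + b / (a * m))))
                  * (c * (b / a * -(m ^ 2)⁻¹)))))
          + (a * (c * b / a * ((m ^ 2)⁻¹ * I (c * (1 + b / (a * m)))))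
            + a * m * (c * b / a
              * (-(2 * m ^ 1) / (m ^ 2) ^ 2 * I (c * (1 + b / (a * m)))
                + (m ^ 2)⁻¹ * (1 / deriv (deriv g) (I (c * (1 + b / (a * m))))
                    * (c * (b / a * -(m ^ 2)⁻¹)))))))) m := by
    have hU1 := (hT2 m).const_mul a
    have hU2 := (hT1 m).mul_const (a - k)
    have hU3 := ((hφ m hm).sub_const β).const_mul a
    have hU4 := (hT4 m).mul (hW.const_mul (c * b / a))
    exact (hU1.add hU2).add (hU3.add hU4)
  have hderθ1 : deriv (deriv θ) m = deriv θ1 m := by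
    apply Filter.EventuallyEq.deriv_eq
    filter_upwards [Ioi_mem_nhds hm] with x hx
    exact hdθ x hx
  have hdI : deriv I (c * (1 + b / (a * m)))
      = 1 / deriv (deriv g) (I (c * (1 + b / (a * m)))) := (hI' _ hLm).deriv
  have heq : deriv (deriv θ) m
      = 2 * a * (a - k) - c ^ 2 * (b ^ 2 / (a * m ^ 3))
          * deriv I (c * (1 + b / (a * m))) := by
    rw [hderθ1, hθ1der.deriv, hdI, (hI _ hLm).2]
    have hm' : m ≠ 0 := ne_of_gt hm
    set G : ℝ := deriv (deriv g) (I (c * (1 + b / (a * m)))) with hG_def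
    set J : ℝ := I (c * (1 + b / (a * m))) with hJ_def
    field_simp
    ring
  refine ⟨heq, ?_⟩
  rw [heq, hdI]
  have hIneg : 1 / deriv (deriv g) (I (c * (1 + b / (a * m)))) < 0 :=
    div_neg_of_pos_of_neg one_pos hG2
  have h1 : 0 ≤ 2 * a * (a - k) := by nlinarith
  have hpos2 : 0 < c ^ 2 * (b ^ 2 / (a * m ^ 3)) := by positivity
  nlinarith
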